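/- Let h : I → ℝ^κ be square-integrable with Gram matrix 𝔜 ≻ 0, and partition h = [h₁; f] where f : I → ℝ^d is the last d components, so that f(τ) = Ĩ h(τ) with Ĩ = [O_{d,κ−d}, I_d]. Then, with 𝔉 = ∫_I f fᵀ dτ, one has the matrix identity √(𝔉^{-1}) ∫_I f(τ) h(τ)ᵀ dτ √(𝔜^{-1}) = √(𝔉^{-1}) Ĩ √(𝔜), and consequently ∫_I (√(𝔉^{-1}) f(τ) ⊗ I_n) x(τ) dτ = (√(𝔉^{-1}) Ĩ √(𝔜) ⊗ I_n) ∫_I (√(𝔜^{-1}) h(τ) ⊗ I_n) x(τ) dτ for any square-integrable x : I → ℝ^n. -/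

import Mathlib

open Matrix MeasureTheory
open scoped Kronecker

/-- The square root of a positive semidefinite matrix, as defined in the older Mathlib
(`Matrix.PosSemidef.sqrt`, since removed). -/
noncomputable def Matrix.PosSemidef.sqrt {n : Type*} [Fintype n] [DecidableEq n]
    {𝕜 : Type*} [RCLike 𝕜] [PartialOrder 𝕜] [StarOrderedRing 𝕜] {A : Matrix n n 𝕜} (hA : A.PosSemidef) : Matrix n n 𝕜 :=
  (hA.1.eigenvectorUnitary : Matrix n n 𝕜) * diagonal ((↑) ∘ Real.sqrt ∘ hA.1.eigenvalues) *
    (star hA.1.eigenvectorUnitary : Matrix n n 𝕜)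

lemma sqrt_eq_cfc {k : ℕ} {Y : Matrix (Fin k) (Fin k) ℝ} (hY : Y.PosSemidef) :
    hY.sqrt = cfc Real.sqrt Y := by
  rw [hY.1.cfc_eq, IsHermitian.cfc, Unitary.conjStarAlgAut_apply]
  rfl

lemma spec_pos {k : ℕ} {Y : Matrix (Fin k) (Fin k) ℝ} (hY : Y.PosDef) :
    ∀ x ∈ spectrum ℝ Y, 0 < x := by
  intro x hx
  rw [hY.1.spectrum_real_eq_range_eigenvalues] at hx
  obtain ⟨i, rfl⟩ := hx
  exact hY.eigenvalues_pos i

lemma psd_sqrt_mul_self {k : ℕ} {Y : Matrix (Fin k) (Fin k) ℝ} (hY : Y.PosDef) :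
    hY.posSemidef.sqrt * hY.posSemidef.sqrt = Y := by
  have hsa : IsSelfAdjoint Y := hY.1.isSelfAdjoint
  rw [sqrt_eq_cfc, ← cfc_mul Real.sqrt Real.sqrt Y (by fun_prop) (by fun_prop)]
  conv_rhs => rw [← cfc_id ℝ Y hsa]
  exact cfc_congr fun x hx => by simp [Real.mul_self_sqrt (spec_pos hY x hx).le]

lemma sqrt_mul_inv_sqrt {k : ℕ} {Y : Matrix (Fin k) (Fin k) ℝ} (hY : Y.PosDef) :
    hY.posSemidef.sqrt * hY.inv.posSemidef.sqrt = 1 := by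
  have hsa : IsSelfAdjoint Y := hY.1.isSelfAdjoint
  have hcont : ContinuousOn (fun x : ℝ => x⁻¹) (spectrum ℝ Y) :=
    continuousOn_inv₀.mono fun x hx => (spec_pos hY x hx).ne'
  have hinv : Y⁻¹ = cfc (fun x : ℝ => x⁻¹) Y := by
    refine Matrix.inv_eq_left_inv ?_
    conv_lhs => arg 2; rw [← cfc_id' ℝ Y hsa]
    rw [← cfc_mul (fun x : ℝ => x⁻¹) (fun x : ℝ => x) Y hcont (by fun_prop)]
    rw [← cfc_one ℝ Y hsa]
    exact cfc_congr fun x hx => by simp [(spec_pos hY x hx).ne']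
  rw [sqrt_eq_cfc, sqrt_eq_cfc, hinv,
    ← cfc_comp Real.sqrt (fun x : ℝ => x⁻¹) Y hsa (by fun_prop) hcont,
    ← cfc_mul Real.sqrt _ Y (by fun_prop) (by fun_prop), ← cfc_one ℝ Y hsa]
  exact cfc_congr fun x hx => by
    have := spec_pos hY x hx
    simp [(Real.sqrt_pos.mpr this).ne']

/-- With `f` the last `d` components of `h` (so `f = Ĩ h`, `Ĩ = [O, I_d]`):
`√(𝔉⁻¹) (∫ f hᵀ) √(𝔜⁻¹) = √(𝔉⁻¹) Ĩ √𝔜`, and consequently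
`∫ (√(𝔉⁻¹) f ⊗ I_n) x = (√(𝔉⁻¹) Ĩ √𝔜 ⊗ I_n) ∫ (√(𝔜⁻¹) h ⊗ I_n) x`. -/
theorem stmt16 (c d n : ℕ) (I : Set ℝ) (hI : MeasurableSet I)
    (h : ℝ → Fin (c + d) → ℝ)
    (hh : ∀ j, MemLp (fun τ => h τ j) 2 (volume.restrict I))
    (Y : Matrix (Fin (c + d)) (Fin (c + d)) ℝ)
    (hYdef : Y = Matrix.of fun i j => ∫ τ in I, h τ i * h τ j)
    (hY : Y.PosDef)
    (f : ℝ → Fin d → ℝ) (hfdef : ∀ τ i, f τ i = h τ (Fin.natAdd c i))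
    (Itil : Matrix (Fin d) (Fin (c + d)) ℝ)
    (hItil : ∀ i j, Itil i j = if j = Fin.natAdd c i then 1 else 0)
    (F : Matrix (Fin d) (Fin d) ℝ)
    (hFdef : F = Matrix.of fun i j => ∫ τ in I, f τ i * f τ j)
    (hF : F.PosDef) :
    hF.inv.posSemidef.sqrt * (Matrix.of fun i j => ∫ τ in I, f τ i * h τ j)
        * hY.inv.posSemidef.sqrt
      = hF.inv.posSemidef.sqrt * Itil * hY.posSemidef.sqrt ∧
    ∀ x : ℝ → Fin n → ℝ, (∀ k, MemLp (fun τ => x τ k) 2 (volume.restrict I)) →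
      (fun p : Fin d × Fin n =>
          ∫ τ in I, (∑ j, hF.inv.posSemidef.sqrt p.1 j * f τ j) * x τ p.2)
        = ((hF.inv.posSemidef.sqrt * Itil * hY.posSemidef.sqrt)
            ⊗ₖ (1 : Matrix (Fin n) (Fin n) ℝ)).mulVec
            (fun p : Fin (c + d) × Fin n =>
              ∫ τ in I, (∑ j, hY.inv.posSemidef.sqrt p.1 j * h τ j) * x τ p.2) := by
  set B := hF.inv.posSemidef.sqrt with hB
  set C := hY.inv.posSemidef.sqrt with hC
  set S := hY.posSemidef.sqrt with hSdef
  have hSC : S * C = 1 := sqrt_mul_inv_sqrt hY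
  have hYC : Y * C = S := by
    rw [← psd_sqrt_mul_self hY, mul_assoc, hSC, mul_one]
  have hMat : (Matrix.of fun i j => ∫ τ in I, f τ i * h τ j) = Itil * Y := by
    ext i j
    simp only [of_apply, mul_apply, hItil, hYdef, hfdef, ite_mul, one_mul, zero_mul]
    rw [Finset.sum_ite_eq' Finset.univ (Fin.natAdd c i)
      (fun m => ∫ τ in I, h τ m * h τ j)]
    simp
  have hAC : B * Itil * S * C = B * Itil := by
    rw [Matrix.mul_assoc (B * Itil) S C, hSC, Matrix.mul_one]
  constructor
  · rw [hMat]
    simp only [Matrix.mul_assoc]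
    rw [hYC]
  · intro x hx
    have hint : ∀ j k, Integrable (fun τ => h τ j * x τ k) (volume.restrict I) := by
      intro j k
      have := (hx k).smul (hh j) (p := 2) (q := 2) (r := 1)
      simpa [Pi.smul_apply', smul_eq_mul, Pi.mul_def] using memLp_one_iff_integrable.mp this
    funext p
    obtain ⟨i, k⟩ := p
    -- u m = ∫ h τ m * x τ k
    set u : Fin (c + d) → ℝ := fun m => ∫ τ in I, h τ m * x τ k with hu
    have hsum : ∀ (m : ℕ) (a : Fin m → ℝ) (g : ℝ → Fin m → ℝ),
        (∀ j, Integrable (fun τ => g τ j * x τ k) (volume.restrict I)) →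
        ∫ τ in I, (∑ j, a j * g τ j) * x τ k
          = ∑ j, a j * ∫ τ in I, g τ j * x τ k := by
      intro m a g hg
      rw [show (fun τ => (∑ j, a j * g τ j) * x τ k)
          = fun τ => ∑ j, a j * (g τ j * x τ k) by
        funext τ; rw [Finset.sum_mul]; exact Finset.sum_congr rfl fun j _ => mul_assoc _ _ _]
      rw [integral_finset_sum _ fun j _ => (hg j).const_mul _]
      exact Finset.sum_congr rfl fun j _ => MeasureTheory.integral_const_mul _ _
    have hLHS : ∫ τ in I, (∑ j, B i j * f τ j) * x τ k
        = ∑ j, B i j * u (Fin.natAdd c j) := by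
      have := hsum d (B i) f (fun j => by
        simpa [hfdef] using hint (Fin.natAdd c j) k)
      rw [this]
      exact Finset.sum_congr rfl fun j _ => by rw [hu]; simp [hfdef]
    show ∫ τ in I, (∑ j, B i j * f τ j) * x τ k = _
    rw [hLHS]
    have hRHS : ((B * Itil * S) ⊗ₖ (1 : Matrix (Fin n) (Fin n) ℝ)).mulVec
        (fun p : Fin (c + d) × Fin n =>
          ∫ τ in I, (∑ j, C p.1 j * h τ j) * x τ p.2) (i, k)
        = ∑ j, (B * Itil * S) i j * ∑ m, C j m * u m := by
      simp only [mulVec, dotProduct]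
      rw [Fintype.sum_prod_type]
      refine Finset.sum_congr rfl fun j _ => ?_
      simp only [Matrix.kroneckerMap_apply, Matrix.one_apply, mul_ite, mul_one, mul_zero,
        ite_mul, zero_mul]
      rw [Finset.sum_ite_eq Finset.univ k]
      simp only [Finset.mem_univ, if_true]
      congr 1
      exact hsum (c + d) (C j) h (fun m => hint m k)
    rw [hRHS]
    -- final algebra
    have step1 : ∑ j, (B * Itil * S) i j * ∑ m, C j m * u m
        = ∑ m, (B * Itil * S * C) i m * u m := by
      simp only [Matrix.mul_apply (M := B * Itil * S) (N := C), Finset.sum_mul,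
        Finset.mul_sum]
      rw [Finset.sum_comm]
      exact Finset.sum_congr rfl fun j _ => Finset.sum_congr rfl fun m _ => by ring
    rw [step1, hAC]
    have : ∑ m, (B * Itil) i m * u m = ∑ j, B i j * u (Fin.natAdd c j) := by
      simp only [Matrix.mul_apply, Finset.sum_mul, hItil, ite_mul, one_mul, zero_mul]
      rw [Finset.sum_comm]
      refine Finset.sum_congr rfl fun j _ => ?_
      simp only [mul_ite, mul_one, mul_zero, ite_mul, zero_mul]
      rw [Finset.sum_ite_eq' Finset.univ (Fin.natAdd c j) (fun m => B i j * u m)]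
      simp
    rw [this]
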